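/- For β ∈ ℂ with e^{-β} ≠ 1 and any integer m, ∫₀¹ (e^{-β [t'-t]} / (1 - e^{-β})) e^{-2πi m t'} dt' = e^{-2πi m t} / (β + 2πi m), for every t ∈ [0,1), where [s] = s + 1{s<0} is the residue of s mod 1, and β + 2πi m ≠ 0. -/

import Mathlib

/-- The residue mod 1 of a real number `s ∈ (-1,1)`: `[s] = s + 1_{s<0}`. -/
noncomputable def resMod1 (s : ℝ) : ℝ := s + (if s < 0 then 1 else 0)

/-- `∫₀¹ (e^{-β[t'-t]}/(1-e^{-β})) e^{-2πimt'} dt' = e^{-2πimt}/(β + 2πim)`. -/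
theorem kernel_fourier_integral (β : ℂ) (hβ : Complex.exp (-β) ≠ 1) (m : ℤ)
    (t : ℝ) (ht : t ∈ Set.Ico (0 : ℝ) 1) (hden : β + 2 * Real.pi * Complex.I * (m : ℂ) ≠ 0) :
    ∫ t' in (0 : ℝ)..1,
        (Complex.exp (-β * ((resMod1 (t' - t) : ℝ) : ℂ)) / (1 - Complex.exp (-β))) *
          Complex.exp (-2 * Real.pi * Complex.I * (m : ℂ) * (t' : ℂ))
    = Complex.exp (-2 * Real.pi * Complex.I * (m : ℂ) * (t : ℂ))
        / (β + 2 * Real.pi * Complex.I * (m : ℂ)) := by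
  obtain ⟨ht0, ht1⟩ := ht
  set c : ℂ := β + 2 * Real.pi * Complex.I * (m : ℂ) with hc
  set f : ℝ → ℂ := fun t' =>
    (Complex.exp (-β * ((resMod1 (t' - t) : ℝ) : ℂ)) / (1 - Complex.exp (-β))) *
      Complex.exp (-2 * Real.pi * Complex.I * (m : ℂ) * (t' : ℂ)) with hf
  have hE : (1 : ℂ) - Complex.exp (-β) ≠ 0 := sub_ne_zero.mpr (Ne.symm hβ)
  have hexpc : Complex.exp (-c) = Complex.exp (-β) := by
    have : -c = -β + (-m : ℤ) * (2 * Real.pi * Complex.I) := by push_cast [hc]; ring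
    rw [this, Complex.exp_add, Complex.exp_int_mul_two_pi_mul_I, mul_one]
  -- piece 2 : on [t,1]
  have key2 : ∀ x : ℝ, t ≤ x →
      f x = (Complex.exp (β * t) / (1 - Complex.exp (-β))) * Complex.exp (-c * x) := by
    intro x hx
    have : resMod1 (x - t) = x - t := by
      unfold resMod1; rw [if_neg (by linarith), add_zero]
    rw [hf]
    simp only [this]
    rw [div_mul_eq_mul_div, div_mul_eq_mul_div, ← Complex.exp_add, ← Complex.exp_add]
    congr 2
    push_cast [hc]; ring
  have key1 : ∀ x : ℝ, x < t →
      f x = (Complex.exp (β * t - β) / (1 - Complex.exp (-β))) * Complex.exp (-c * x) := by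
    intro x hx
    have : resMod1 (x - t) = x - t + 1 := by
      unfold resMod1; rw [if_pos (by linarith)]
    rw [hf]
    simp only [this]
    rw [div_mul_eq_mul_div, div_mul_eq_mul_div, ← Complex.exp_add, ← Complex.exp_add]
    congr 2
    push_cast [hc]; ring
  -- ae equality on pieces
  have hne : ∀ᵐ x : ℝ, x ≠ t := by
    refine MeasureTheory.ae_iff.mpr ?_
    simpa using MeasureTheory.measure_singleton (μ := MeasureTheory.volume) t
  have hcongr1 : f =ᵐ[MeasureTheory.volume.restrict (Set.uIoc 0 t)]
      fun x => (Complex.exp (β * t - β) / (1 - Complex.exp (-β))) * Complex.exp (-c * x) := by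
    refine (MeasureTheory.ae_restrict_iff' measurableSet_uIoc).mpr ?_
    filter_upwards [hne] with x hx hmem
    rw [Set.uIoc_of_le ht0] at hmem
    exact key1 x (lt_of_le_of_ne hmem.2 hx)
  have hcongr2 : Set.EqOn f
      (fun x => (Complex.exp (β * t) / (1 - Complex.exp (-β))) * Complex.exp (-c * x))
      (Set.uIcc t 1) := by
    intro x hx
    rw [Set.uIcc_of_le (le_of_lt ht1)] at hx
    exact key2 x hx.1
  -- integrability
  have hgc : Continuous fun x : ℝ => Complex.exp (-c * x) := by fun_prop
  have hg1 : IntervalIntegrable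
      (fun x => (Complex.exp (β * t - β) / (1 - Complex.exp (-β))) * Complex.exp (-c * x))
      MeasureTheory.volume 0 t := (continuous_const.mul hgc).intervalIntegrable 0 t
  have hg2 : IntervalIntegrable
      (fun x => (Complex.exp (β * t) / (1 - Complex.exp (-β))) * Complex.exp (-c * x))
      MeasureTheory.volume t 1 := (continuous_const.mul hgc).intervalIntegrable t 1
  have hint2 : IntervalIntegrable f MeasureTheory.volume t 1 := by
    refine hg2.congr_ae ?_
    refine (MeasureTheory.ae_restrict_iff' measurableSet_uIoc).mpr ?_
    filter_upwards with x hmem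
    rw [Set.uIoc_of_le (le_of_lt ht1)] at hmem
    exact (key2 x (le_of_lt hmem.1)).symm
  have hint1 : IntervalIntegrable f MeasureTheory.volume 0 t := hg1.congr_ae hcongr1.symm
  have hsplit : ∫ t' in (0:ℝ)..1, f t' = (∫ t' in (0:ℝ)..t, f t') + ∫ t' in t..1, f t' :=
    (intervalIntegral.integral_add_adjacent_intervals hint1 hint2).symm
  have hcne : -c ≠ 0 := neg_ne_zero.mpr hden
  have I1 : ∫ t' in (0:ℝ)..t, f t'
      = (Complex.exp (β * t - β) / (1 - Complex.exp (-β))) *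
          ((Complex.exp (-c * t) - 1) / (-c)) := by
    have hae : ∀ᵐ x ∂MeasureTheory.volume, x ∈ Set.uIoc (0:ℝ) t →
        f x = Complex.exp (β * t - β) / (1 - Complex.exp (-β)) * Complex.exp (-c * x) := by
      filter_upwards [hne] with x hx hmem
      rw [Set.uIoc_of_le ht0] at hmem
      exact key1 x (lt_of_le_of_ne hmem.2 hx)
    rw [intervalIntegral.integral_congr_ae hae, intervalIntegral.integral_const_mul,
      integral_exp_mul_complex hcne]
    norm_num
  have I2 : ∫ t' in t..1, f t'
      = (Complex.exp (β * t) / (1 - Complex.exp (-β))) *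
          ((Complex.exp (-c) - Complex.exp (-c * t)) / (-c)) := by
    rw [intervalIntegral.integral_congr hcongr2]
    rw [intervalIntegral.integral_const_mul, integral_exp_mul_complex hcne]
    simp
  have h2 : Complex.exp (-2 * Real.pi * Complex.I * (m : ℂ) * (t : ℂ))
      = Complex.exp (β * t) * Complex.exp (-c * t) := by
    rw [← Complex.exp_add]
    congr 1
    rw [hc]; push_cast; ring
  have h1 : Complex.exp (β * t - β) = Complex.exp (β * t) * Complex.exp (-β) := by
    rw [← Complex.exp_add]; ring_nf
  rw [hsplit, I1, I2, hexpc, h1, h2]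
  field_simp
  ring
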